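/- Under the fulcrum hypotheses, the algebra homomorphism T(V) → T(V)#_M H determined by v ↦ π(ι(s(v))) is injective, and the map H → T(V)#_M H, h ↦ π(ι(f(h))), is an injective algebra homomorphism; thus T(V) and H embed as subalgebras of T(V)#_M H. -/

import Mathlib

open TensorProduct

/-- For a left module `M` over a `k`-algebra `H`, the `k`-linear map `h ↦ h • x`. -/
noncomputable def actL (k : Type*) {H M : Type*} [CommSemiring k] [Semiring H] [Algebra k H]
    [AddCommMonoid M] [Module k M] [Module H M] [IsScalarTower k H M] (x : M) :
    H →ₗ[k] M where
  toFun h := h • x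
  map_add' a b := add_smul a b x
  map_smul' c a := smul_assoc c a x

/-- The adjoint action `h ↦ Σ h₁ a S(h₂)` of a Hopf algebra on itself,
as a `k`-linear map in `h`. -/
noncomputable def adjL (k : Type*) {H : Type*} [CommSemiring k] [Semiring H] [HopfAlgebra k H]
    (a : H) : H →ₗ[k] H :=
  LinearMap.mul' k H ∘ₗ TensorProduct.map (LinearMap.mulRight k a)
    (HopfAlgebra.antipode (R := k)) ∘ₗ Coalgebra.comul

/-- `Σ ι(h₁ • x) · ι(f h₂)`, as a `k`-linear map in `h`, inside the tensor algebra `T(M)`. -/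
noncomputable def commRHS (k : Type*) {H M : Type*} [CommSemiring k] [Semiring H]
    [HopfAlgebra k H] [AddCommMonoid M] [Module k M] [Module H M] [IsScalarTower k H M]
    (f : H →ₗ[k] M) (x : M) : H →ₗ[k] TensorAlgebra k M :=
  LinearMap.mul' k (TensorAlgebra k M) ∘ₗ
    TensorProduct.map ((TensorAlgebra.ι k (M := M)) ∘ₗ actL k x)
      ((TensorAlgebra.ι k (M := M)) ∘ₗ f) ∘ₗ
    Coalgebra.comul

/-- The defining relations of the fulcrum `T(V)#_M H`:
`ι(f h)ι(f h') = ι(f (h h'))`, `ι(f 1) = 1`, and `ι(f h)ι(x) = Σ ι(h₁ • x)ι(f h₂)`. -/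
def fulcrumRel (k : Type*) {H M : Type*} [CommSemiring k] [Semiring H] [HopfAlgebra k H]
    [AddCommMonoid M] [Module k M] [Module H M] [IsScalarTower k H M] (f : H →ₗ[k] M)
    (u v : TensorAlgebra k M) : Prop :=
  (∃ h h' : H, u = TensorAlgebra.ι k (f h) * TensorAlgebra.ι k (f h') ∧
      v = TensorAlgebra.ι k (f (h * h'))) ∨
  (u = TensorAlgebra.ι k (f 1) ∧ v = 1) ∨
  (∃ (h : H) (x : M), u = TensorAlgebra.ι k (f h) * TensorAlgebra.ι k x ∧
      v = commRHS k f x h)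


section FulcrumAux

open Coalgebra

variable {k H M V : Type*} [CommSemiring k] [Semiring H] [HopfAlgebra k H]
  [AddCommMonoid M] [Module k M] [Module H M] [IsScalarTower k H M]
  [AddCommMonoid V] [Module k V]

@[simp] lemma actL_apply (x : M) (h : H) : actL k x h = h • x := rfl

lemma actL_add (x y : M) : actL k (H := H) (x + y) = actL k x + actL k y := by
  ext h; simp [smul_add]

lemma actL_smul (c : k) (x : M) : actL k (H := H) (c • x) = c • actL k x := by
  ext h; exact smul_comm h c x

/-- Hopf identity: `Σ (b₁ a S(b₂)) b₃ = b a`. -/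
lemma adjL_mul_sum (a b : H) (r : Coalgebra.Repr k b (H × H)) :
    ∑ i ∈ r.index, adjL k a (r.left i) * r.right i = b * a := by
  classical
  have hadjL : ∀ (c : H) (rc : Coalgebra.Repr k c (H × H)),
      adjL k a c = ∑ j ∈ rc.index,
        rc.left j * a * HopfAlgebra.antipode (R := k) (rc.right j) := by
    intro c rc
    rw [adjL, LinearMap.comp_apply, LinearMap.comp_apply, ← rc.eq, map_sum, map_sum]
    simp
  set S : H →ₗ[k] H := HopfAlgebra.antipode (R := k) with hS
  set Φ : H ⊗[k] (H ⊗[k] H) →ₗ[k] H :=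
    LinearMap.mul' k H ∘ₗ TensorProduct.map (LinearMap.mulRight k a)
      (LinearMap.mul' k H ∘ₗ TensorProduct.map S LinearMap.id) with hΦ
  have hΦt : ∀ x y z : H, Φ (x ⊗ₜ[k] (y ⊗ₜ[k] z)) = x * a * (S y * z) := by
    intro x y z; simp [hΦ]
  have key := congrArg Φ
    (Coalgebra.sum_tmul_tmul_eq r (fun i => ℛ k (r.left i)) (fun i => ℛ k (r.right i)))
  simp only [map_sum, hΦt] at key
  have lhs : ∑ i ∈ r.index, adjL k a (r.left i) * r.right i
      = ∑ i ∈ r.index, ∑ j ∈ (ℛ k (r.left i)).index,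
          (ℛ k (r.left i)).left j * a * (S ((ℛ k (r.left i)).right j) * r.right i) := by
    refine Finset.sum_congr rfl fun i _ => ?_
    rw [hadjL _ (ℛ k (r.left i)), Finset.sum_mul]
    exact Finset.sum_congr rfl fun j _ => by rw [mul_assoc]
  rw [lhs, key]
  have step : ∀ i ∈ r.index,
      ∑ j ∈ (ℛ k (r.right i)).index,
        r.left i * a * (S ((ℛ k (r.right i)).left j) * (ℛ k (r.right i)).right j)
      = Coalgebra.counit (R := k) (r.right i) • (r.left i * a) := by
    intro i _
    rw [← Finset.mul_sum, HopfAlgebra.sum_antipode_mul_eq_algebraMap_counit (ℛ k (r.right i)),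
      ← Algebra.commutes, ← Algebra.smul_def]
  rw [Finset.sum_congr rfl step]
  have h2 := congrArg (TensorProduct.rid k H) (Coalgebra.sum_tmul_counit_eq r)
  simp only [map_sum, TensorProduct.rid_tmul, one_smul] at h2
  calc ∑ i ∈ r.index, Coalgebra.counit (R := k) (r.right i) • (r.left i * a)
      = (∑ i ∈ r.index, Coalgebra.counit (R := k) (r.right i) • r.left i) * a := by
        rw [Finset.sum_mul]
        exact Finset.sum_congr rfl fun i _ => (smul_mul_assoc _ _ _).symm
    _ = b * a := by rw [h2]

variable (p : M →ₗ[k] H) (q : M →ₗ[k] V)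

/-- `Kop p q x b = Σ ι(q(b₁•x)) ⊗ b₂ + 1 ⊗ (p(b₁•x) * b₂)` in `T(V) ⊗ H`. -/
noncomputable def Kop (x : M) : H →ₗ[k] TensorAlgebra k V ⊗[k] H :=
  (TensorProduct.map ((TensorAlgebra.ι k) ∘ₗ q ∘ₗ actL k x) LinearMap.id
    + (TensorProduct.mk k (TensorAlgebra k V) H 1) ∘ₗ LinearMap.mul' k H ∘ₗ
        TensorProduct.map (p ∘ₗ actL k x) LinearMap.id) ∘ₗ Coalgebra.comul

lemma Kop_repr (x : M) (b : H) (r : Coalgebra.Repr k b (H × H)) :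
    Kop p q x b = ∑ i ∈ r.index,
      (TensorAlgebra.ι k (q (r.left i • x)) ⊗ₜ[k] r.right i
        + (1 : TensorAlgebra k V) ⊗ₜ[k] (p (r.left i • x) * r.right i)) := by
  rw [Kop, LinearMap.comp_apply, ← r.eq, map_sum]
  refine Finset.sum_congr rfl fun i _ => ?_
  simp

lemma Kop_add (x y : M) : Kop p q (x + y) = Kop p q x + Kop p q y := by
  ext b
  rw [LinearMap.add_apply, Kop_repr p q (x + y) b (ℛ k b), Kop_repr p q x b (ℛ k b),
    Kop_repr p q y b (ℛ k b), ← Finset.sum_add_distrib]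
  refine Finset.sum_congr rfl fun i _ => ?_
  simp only [smul_add, map_add, add_mul, TensorProduct.add_tmul, TensorProduct.tmul_add]
  abel

lemma Kop_smul (c : k) (x : M) : Kop p q (c • x) = c • Kop p q x := by
  ext b
  rw [LinearMap.smul_apply, Kop_repr p q (c • x) b (ℛ k b), Kop_repr p q x b (ℛ k b),
    Finset.smul_sum]
  refine Finset.sum_congr rfl fun i _ => ?_
  rw [smul_comm ((ℛ k b).left i) c x]
  simp [map_smul, smul_add, TensorProduct.smul_tmul, TensorProduct.tmul_smul, smul_mul_assoc]

lemma Kop_one (x : M) :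
    Kop p q x 1 = TensorAlgebra.ι k (q x) ⊗ₜ[k] (1 : H)
      + (1 : TensorAlgebra k V) ⊗ₜ[k] p x := by
  rw [Kop, LinearMap.comp_apply, Bialgebra.comul_one, Algebra.TensorProduct.one_def]
  simp

/-- The fulcrum representation on `T(V) ⊗ H`. -/
noncomputable def Gmap : M →ₗ[k] Module.End k (TensorAlgebra k V ⊗[k] H) where
  toFun x := LinearMap.mul' k _ ∘ₗ TensorProduct.map
    (Algebra.TensorProduct.includeLeft (R := k) (A := TensorAlgebra k V)
      (B := H)).toLinearMap (Kop p q x)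
  map_add' x y := by rw [Kop_add, TensorProduct.map_add_right, LinearMap.comp_add]
  map_smul' c x := by
    rw [Kop_smul, TensorProduct.map_smul_right, LinearMap.comp_smul, RingHom.id_apply]

lemma Gmap_tmul (x : M) (t : TensorAlgebra k V) (b : H) :
    Gmap p q x (t ⊗ₜ[k] b) = (t ⊗ₜ[k] (1 : H)) * Kop p q x b := by
  simp [Gmap]

variable (f : H →ₗ[k] M)

lemma Kop_f (hadj : ∀ h a : H, h • f a = f (adjL k a h))
    (hpf : ∀ a, p (f a) = a) (hqf : ∀ a, q (f a) = 0) (a b : H) :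
    Kop p q (f a) b = (1 : TensorAlgebra k V) ⊗ₜ[k] (b * a) := by
  rw [Kop_repr p q (f a) b (ℛ k b)]
  have h1 : ∀ c : H, q (c • f a) = 0 := fun c => by rw [hadj]; exact hqf _
  have h2 : ∀ c : H, p (c • f a) = adjL k a c := fun c => by rw [hadj]; exact hpf _
  simp only [h1, h2, map_zero, TensorProduct.zero_tmul, zero_add]
  rw [← TensorProduct.tmul_sum, adjL_mul_sum]

lemma Gmap_f (hadj : ∀ h a : H, h • f a = f (adjL k a h))
    (hpf : ∀ a, p (f a) = a) (hqf : ∀ a, q (f a) = 0) (a : H) :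
    Gmap p q (f a)
      = LinearMap.mulRight k ((1 : TensorAlgebra k V) ⊗ₜ[k] a) := by
  apply TensorProduct.ext'
  intro t b
  rw [Gmap_tmul, Kop_f p q f hadj hpf hqf, LinearMap.mulRight_apply,
    Algebra.TensorProduct.tmul_mul_tmul, Algebra.TensorProduct.tmul_mul_tmul,
    one_mul, mul_one]

lemma Kop_mul (x : M) (b h : H) (rh : Coalgebra.Repr k h (H × H)) :
    Kop p q x (b * h) = ∑ i ∈ rh.index,
      Kop p q (rh.left i • x) b * ((1 : TensorAlgebra k V) ⊗ₜ[k] rh.right i) := by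
  classical
  set rb := ℛ k b with hrb
  have hcm : Coalgebra.comul (R := k) (b * h) = ∑ i ∈ rh.index, ∑ j ∈ rb.index,
      (rb.left j * rh.left i) ⊗ₜ[k] (rb.right j * rh.right i) := by
    rw [Bialgebra.comul_mul, ← rb.eq, ← rh.eq, Finset.sum_mul_sum, Finset.sum_comm]
    exact Finset.sum_congr rfl fun i _ => Finset.sum_congr rfl fun j _ =>
      Algebra.TensorProduct.tmul_mul_tmul _ _ _ _
  rw [Kop, LinearMap.comp_apply, hcm, map_sum]
  refine Finset.sum_congr rfl fun i _ => ?_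
  rw [map_sum, Kop_repr p q _ b rb, Finset.sum_mul]
  refine Finset.sum_congr rfl fun j _ => ?_
  simp [add_mul, Algebra.TensorProduct.tmul_mul_tmul, mul_smul, mul_assoc]

/-- The lifted algebra map `T(M) → (End (T(V) ⊗ H))ᵐᵒᵖ`. -/
noncomputable def fulGalg :
    TensorAlgebra k M →ₐ[k] (Module.End k (TensorAlgebra k V ⊗[k] H))ᵐᵒᵖ :=
  TensorAlgebra.lift k ((MulOpposite.opLinearEquiv k).toLinearMap ∘ₗ Gmap p q)

lemma fulGalg_ι (x : M) :
    fulGalg p q (TensorAlgebra.ι k x) = MulOpposite.op (Gmap p q x) := by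
  simp [fulGalg]

lemma fulGalg_rel (hadj : ∀ h a : H, h • f a = f (adjL k a h))
    (hpf : ∀ a, p (f a) = a) (hqf : ∀ a, q (f a) = 0) :
    ∀ ⦃u v⦄, fulcrumRel k f u v → fulGalg p q (V := V) u = fulGalg p q v := by
  rintro u v (⟨h, h', rfl, rfl⟩ | ⟨rfl, rfl⟩ | ⟨h, x, rfl, rfl⟩)
  · rw [map_mul, fulGalg_ι, fulGalg_ι, fulGalg_ι, Gmap_f p q f hadj hpf hqf,
      Gmap_f p q f hadj hpf hqf, Gmap_f p q f hadj hpf hqf, ← MulOpposite.op_mul]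
    congr 1
    rw [Module.End.mul_eq_comp, ← LinearMap.mulRight_mul,
      Algebra.TensorProduct.tmul_mul_tmul, one_mul]
  · rw [fulGalg_ι, Gmap_f p q f hadj hpf hqf, map_one,
      ← Algebra.TensorProduct.one_def, LinearMap.mulRight_one]
    rfl
  · rw [map_mul, fulGalg_ι, fulGalg_ι, Gmap_f p q f hadj hpf hqf, ← MulOpposite.op_mul]
    have hcr : commRHS k f x h = ∑ i ∈ (ℛ k h).index,
        TensorAlgebra.ι k ((ℛ k h).left i • x)
          * TensorAlgebra.ι k (f ((ℛ k h).right i)) := by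
      rw [commRHS, LinearMap.comp_apply, LinearMap.comp_apply, ← (ℛ k h).eq,
        map_sum, map_sum]
      simp
    rw [hcr, map_sum]
    have hterm : ∀ i ∈ (ℛ k h).index,
        fulGalg p q (V := V) (TensorAlgebra.ι k ((ℛ k h).left i • x)
            * TensorAlgebra.ι k (f ((ℛ k h).right i)))
          = MulOpposite.op
              (LinearMap.mulRight k ((1 : TensorAlgebra k V) ⊗ₜ[k] (ℛ k h).right i)
                * Gmap p q ((ℛ k h).left i • x)) := by
      intro i _
      rw [map_mul, fulGalg_ι, fulGalg_ι, Gmap_f p q f hadj hpf hqf, ← MulOpposite.op_mul]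
    rw [Finset.sum_congr rfl hterm, ← Finset.op_sum]
    congr 1
    apply TensorProduct.ext'
    intro t b
    rw [Module.End.mul_apply, LinearMap.mulRight_apply, Algebra.TensorProduct.tmul_mul_tmul,
      mul_one, Gmap_tmul, Kop_mul p q x b h (ℛ k h), Finset.mul_sum, LinearMap.sum_apply]
    refine Finset.sum_congr rfl fun i _ => ?_
    rw [Module.End.mul_apply, Gmap_tmul, LinearMap.mulRight_apply, mul_assoc]

end FulcrumAux

/-- Under the fulcrum hypotheses, the algebra homomorphism
`T(V) → T(V)#_M H` determined by `v ↦ π(ι(s(v)))` is injective, and the (k-linear) map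
`H → T(V)#_M H`, `h ↦ π(ι(f(h)))`, is injective, multiplicative and unital, i.e. an
injective algebra homomorphism; thus `T(V)` and `H` embed as subalgebras of `T(V)#_M H`. -/
theorem fulcrum_subalgebras
    {k H M V : Type*} [Field k] [Ring H] [HopfAlgebra k H]
    [AddCommGroup M] [Module k M] [Module H M] [IsScalarTower k H M]
    [AddCommGroup V] [Module k V]
    (f : H →ₗ[k] M) (s : V →ₗ[k] M)
    (hf : Function.Injective f) (hs : Function.Injective s)
    (hS : Function.Bijective (HopfAlgebra.antipode (R := k) (A := H)))
    (hadj : ∀ h a : H, h • f a = f (adjL k a h))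
    (hcompl : IsCompl (LinearMap.range f) (LinearMap.range s)) :
    Function.Injective
      (TensorAlgebra.lift k
        ((RingQuot.mkAlgHom k (fulcrumRel k f)).toLinearMap ∘ₗ
          (TensorAlgebra.ι k (M := M)) ∘ₗ s)) ∧
    Function.Injective
      ((RingQuot.mkAlgHom k (fulcrumRel k f)).toLinearMap ∘ₗ
        (TensorAlgebra.ι k (M := M)) ∘ₗ f) ∧
    (∀ h h' : H,
      ((RingQuot.mkAlgHom k (fulcrumRel k f)).toLinearMap ∘ₗ
        (TensorAlgebra.ι k (M := M)) ∘ₗ f) (h * h') =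
      ((RingQuot.mkAlgHom k (fulcrumRel k f)).toLinearMap ∘ₗ
        (TensorAlgebra.ι k (M := M)) ∘ₗ f) h *
      ((RingQuot.mkAlgHom k (fulcrumRel k f)).toLinearMap ∘ₗ
        (TensorAlgebra.ι k (M := M)) ∘ₗ f) h') ∧
    ((RingQuot.mkAlgHom k (fulcrumRel k f)).toLinearMap ∘ₗ
      (TensorAlgebra.ι k (M := M)) ∘ₗ f) (1 : H) = 1 := by
  classical
  -- linear projections `p : M → H` and `q : M → V` splitting `f` and `s`
  set p : M →ₗ[k] H := (LinearEquiv.ofInjective f hf).symm.toLinearMap ∘ₗ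
    Submodule.linearProjOfIsCompl _ _ hcompl with hpdef
  set q : M →ₗ[k] V := (LinearEquiv.ofInjective s hs).symm.toLinearMap ∘ₗ
    Submodule.linearProjOfIsCompl _ _ hcompl.symm with hqdef
  have hpf : ∀ a : H, p (f a) = a := by
    intro a
    show (LinearEquiv.ofInjective f hf).symm
      ((Submodule.linearProjOfIsCompl _ _ hcompl) (f a)) = a
    have h1 : (Submodule.linearProjOfIsCompl _ _ hcompl) (f a)
        = ⟨f a, LinearMap.mem_range_self f a⟩ :=
      Submodule.linearProjOfIsCompl_apply_left hcompl ⟨f a, LinearMap.mem_range_self f a⟩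
    rw [h1, LinearEquiv.symm_apply_eq]
    exact Subtype.ext (LinearEquiv.ofInjective_apply (f := f) (h := hf) a).symm
  have hqf : ∀ a : H, q (f a) = 0 := by
    intro a
    show (LinearEquiv.ofInjective s hs).symm
      ((Submodule.projectionOnto _ _ hcompl.symm) (f a)) = 0
    rw [Submodule.linearProjOfIsCompl_apply_right' hcompl.symm
      (LinearMap.mem_range_self f a), map_zero]
  have hqs : ∀ v : V, q (s v) = v := by
    intro v
    show (LinearEquiv.ofInjective s hs).symm
      ((Submodule.linearProjOfIsCompl _ _ hcompl.symm) (s v)) = v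
    have h1 : (Submodule.linearProjOfIsCompl _ _ hcompl.symm) (s v)
        = ⟨s v, LinearMap.mem_range_self s v⟩ :=
      Submodule.linearProjOfIsCompl_apply_left hcompl.symm ⟨s v, LinearMap.mem_range_self s v⟩
    rw [h1, LinearEquiv.symm_apply_eq]
    exact Subtype.ext (LinearEquiv.ofInjective_apply (f := s) (h := hs) v).symm
  have hps : ∀ v : V, p (s v) = 0 := by
    intro v
    show (LinearEquiv.ofInjective f hf).symm
      ((Submodule.projectionOnto _ _ hcompl) (s v)) = 0
    rw [Submodule.linearProjOfIsCompl_apply_right' hcompl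
      (LinearMap.mem_range_self s v), map_zero]
  -- the representation of the fulcrum on `T(V) ⊗ H`
  set Ξ : RingQuot (fulcrumRel k f) →ₐ[k]
      (Module.End k (TensorAlgebra k V ⊗[k] H))ᵐᵒᵖ :=
    RingQuot.liftAlgHom k ⟨fulGalg p q, fulGalg_rel p q f hadj hpf hqf⟩ with hΞdef
  have hΞ : ∀ m : TensorAlgebra k M,
      Ξ (RingQuot.mkAlgHom k (fulcrumRel k f) m) = fulGalg p q m := fun m =>
    RingQuot.liftAlgHom_mkAlgHom_apply _ _ _ _
  refine ⟨?_, ?_, ?_, ?_⟩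
  · -- injectivity of `T(V) → T(V)#_M H`
    set L := TensorAlgebra.lift k
      ((RingQuot.mkAlgHom k (fulcrumRel k f)).toLinearMap ∘ₗ
        (TensorAlgebra.ι k (M := M)) ∘ₗ s) with hL
    have hact : ∀ t : TensorAlgebra k V, ∀ t' : TensorAlgebra k V,
        (MulOpposite.unop (Ξ (L t))) (t' ⊗ₜ[k] (1 : H)) = (t' * t) ⊗ₜ[k] (1 : H) := by
      intro t
      induction t using TensorAlgebra.induction with
      | algebraMap r =>
        intro t'
        rw [AlgHom.commutes, AlgHom.commutes, MulOpposite.algebraMap_apply,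
          MulOpposite.unop_op, Module.algebraMap_end_apply, TensorProduct.smul_tmul',
          Algebra.smul_def, Algebra.commutes]
      | ι v =>
        intro t'
        rw [hL, TensorAlgebra.lift_ι_apply]
        simp only [LinearMap.comp_apply, AlgHom.toLinearMap_apply]
        rw [hΞ, fulGalg_ι, MulOpposite.unop_op, Gmap_tmul, Kop_one, hqs, hps,
          TensorProduct.tmul_zero, add_zero, Algebra.TensorProduct.tmul_mul_tmul, mul_one]
      | mul t1 t2 ih1 ih2 =>
        intro t'
        rw [map_mul, map_mul, MulOpposite.unop_mul, Module.End.mul_apply, ih1, ih2, mul_assoc]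
      | add t1 t2 ih1 ih2 =>
        intro t'
        rw [map_add, map_add, MulOpposite.unop_add, LinearMap.add_apply, ih1, ih2,
          ← TensorProduct.add_tmul, mul_add]
    intro t1 t2 h12
    have e1 := hact t1 1
    rw [h12, hact t2 1, one_mul, one_mul] at e1
    have e2 := congrArg ((TensorProduct.rid k (TensorAlgebra k V)).toLinearMap ∘ₗ
      TensorProduct.map LinearMap.id (Coalgebra.counit (R := k))) e1
    simpa using e2.symm
  · -- injectivity of `H → T(V)#_M H`
    intro a b hab
    simp only [LinearMap.comp_apply, AlgHom.toLinearMap_apply] at hab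
    have e := congrArg (fun u => (MulOpposite.unop (Ξ u))
      ((1 : TensorAlgebra k V) ⊗ₜ[k] (1 : H))) hab
    rw [hΞ, hΞ, fulGalg_ι, fulGalg_ι, MulOpposite.unop_op, MulOpposite.unop_op,
      Gmap_f p q f hadj hpf hqf, Gmap_f p q f hadj hpf hqf] at e
    rw [LinearMap.mulRight_apply, LinearMap.mulRight_apply,
      Algebra.TensorProduct.tmul_mul_tmul, Algebra.TensorProduct.tmul_mul_tmul,
      one_mul, one_mul] at e
    have e2 := congrArg ((TensorProduct.lid k H).toLinearMap ∘ₗ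
      TensorProduct.map (TensorAlgebra.lift k (0 : V →ₗ[k] k)).toLinearMap
        LinearMap.id) e
    simpa using e2
  · -- multiplicativity
    intro h h'
    simp only [LinearMap.comp_apply, AlgHom.toLinearMap_apply]
    rw [← map_mul]
    have hrel : fulcrumRel k f
        (TensorAlgebra.ι k (f h) * TensorAlgebra.ι k (f h'))
        (TensorAlgebra.ι k (f (h * h'))) := Or.inl ⟨h, h', rfl, rfl⟩
    exact (RingQuot.mkAlgHom_rel k hrel).symm
  · -- unitality
    simp only [LinearMap.comp_apply, AlgHom.toLinearMap_apply]
    have hrel : fulcrumRel k f (TensorAlgebra.ι k (f 1)) 1 := Or.inr (Or.inl ⟨rfl, rfl⟩)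
    rw [RingQuot.mkAlgHom_rel k hrel, map_one]
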